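/- Fix n ≥ 1 and let 𝒜 be the family of all (n+1)-element subsets of Euclidean n-space ℝⁿ (called simplices). Let V ∈ 𝒜 and let P ∈ ℝⁿ be a point such that g(P) = P for every isometry g of ℝⁿ with g(V) = V. Then there exists a center, i.e., a map 𝔷 : 𝒜 → ℝⁿ satisfying 𝔷(g(W)) = g(𝔷(W)) for every isometry g of ℝⁿ and every W ∈ 𝒜, such that 𝔷(V) = P. -/

import Mathlib

open scoped Classical

/-- A center for simplices in ℝⁿ: a map `𝔷` from finite subsets of ℝⁿ to ℝⁿ which,
on (n+1)-element subsets (simplices), commutes with every isometry of ℝⁿ acting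
pointwise. -/
def IsSimplexCenter (n : ℕ)
    (Z : Finset (EuclideanSpace ℝ (Fin n)) → EuclideanSpace ℝ (Fin n)) : Prop :=
  ∀ (g : EuclideanSpace ℝ (Fin n) ≃ᵢ EuclideanSpace ℝ (Fin n))
    (W : Finset (EuclideanSpace ℝ (Fin n))), W.card = n + 1 →
      Z (W.image g) = g (Z W)

section Aux

variable {E : Type*} [NormedAddCommGroup E] [NormedSpace ℝ E] [DecidableEq E]

omit [NormedSpace ℝ E] in
lemma image_image_trans (g h : E ≃ᵢ E) (W : Finset E) :
    (W.image g).image h = W.image (g.trans h) := by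
  rw [Finset.image_image]; rfl

/-- Centroid is equivariant under isometries. -/
lemma centroid_image (g : E ≃ᵢ E) (W : Finset E) (hW : W.Nonempty) :
    (W.image g).centroid ℝ id = g (W.centroid ℝ id) := by
  have hinj : Function.Injective (g : E → E) := g.injective
  have h1 : W.image g = W.map ⟨g, hinj⟩ := by
    ext x; simp
  rw [h1, Finset.centroid_map]
  have hsum : ∑ i ∈ W, W.centroidWeights ℝ i = 1 :=
    W.sum_centroidWeights_eq_one_of_nonempty ℝ hW
  have hmap := W.map_affineCombination (id : E → E) (W.centroidWeights ℝ) hsum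
    g.toRealAffineIsometryEquiv.toAffineIsometry.toAffineMap
  simp only [Finset.centroid_def]
  exact hmap.symm

omit [NormedSpace ℝ E] in
lemma image_trans_symm (e : E ≃ᵢ E) (W : Finset E) : W.image ⇑(e.trans e.symm) = W := by
  have h : ⇑(e.trans e.symm) = id := funext fun x => e.symm_apply_apply x
  rw [h, Finset.image_id]

end Aux

/-- For `n ≥ 1`, a simplex `V` in ℝⁿ and a point `P` fixed by all the isometries of
ℝⁿ fixing `V` (pointwise action on sets), there exists a center `𝔷` with `𝔷 V = P`. -/
theorem stmt_11 (n : ℕ) (hn : 1 ≤ n)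
    (V : Finset (EuclideanSpace ℝ (Fin n))) (hV : V.card = n + 1)
    (P : EuclideanSpace ℝ (Fin n))
    (hP : ∀ g : EuclideanSpace ℝ (Fin n) ≃ᵢ EuclideanSpace ℝ (Fin n),
      V.image g = V → g P = P) :
    ∃ Z, IsSimplexCenter n Z ∧ Z V = P := by
  -- key: if two isometries send V to the same set, they agree on P
  have key : ∀ a b : EuclideanSpace ℝ (Fin n) ≃ᵢ EuclideanSpace ℝ (Fin n),
      V.image a = V.image b → a P = b P := by
    intro a b hab
    have h1 : V.image (b.trans a.symm) = V := by
      rw [← image_image_trans, ← hab, image_image_trans, image_trans_symm]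
    have h2 : a.symm (b P) = P := hP _ h1
    calc a P = a (a.symm (b P)) := by rw [h2]
    _ = b P := by simp
  classical
  refine ⟨fun W => if h : ∃ g : EuclideanSpace ℝ (Fin n) ≃ᵢ EuclideanSpace ℝ (Fin n),
      W = V.image g then (Classical.choose h) P else W.centroid ℝ id, ?_, ?_⟩
  · intro g W hW
    dsimp only
    by_cases h : ∃ a : EuclideanSpace ℝ (Fin n) ≃ᵢ EuclideanSpace ℝ (Fin n), W = V.image a
    · obtain ⟨a, ha⟩ := h
      have h2 : ∃ b : EuclideanSpace ℝ (Fin n) ≃ᵢ EuclideanSpace ℝ (Fin n),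
          W.image g = V.image b :=
        ⟨a.trans g, by rw [ha, image_image_trans]⟩
      have h : ∃ a : EuclideanSpace ℝ (Fin n) ≃ᵢ EuclideanSpace ℝ (Fin n),
          W = V.image a := ⟨a, ha⟩
      rw [dif_pos h, dif_pos h2]
      have hb := Classical.choose_spec h2
      have hA := Classical.choose_spec h
      have heq : V.image ⇑(Classical.choose h2) = V.image ⇑((Classical.choose h).trans g) := by
        rw [← image_image_trans, ← hA]; exact hb.symm
      have := key _ _ heq
      simpa using this
    · have h2 : ¬ ∃ b : EuclideanSpace ℝ (Fin n) ≃ᵢ EuclideanSpace ℝ (Fin n),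
          W.image g = V.image b := by
        rintro ⟨b, hb⟩
        refine h ⟨b.trans g.symm, ?_⟩
        rw [← image_image_trans, ← hb, image_image_trans, image_trans_symm]
      rw [dif_neg h, dif_neg h2]
      exact centroid_image g W (Finset.card_pos.mp (by omega))
  · dsimp only
    have hex : ∃ g : EuclideanSpace ℝ (Fin n) ≃ᵢ EuclideanSpace ℝ (Fin n),
        V = V.image g := ⟨IsometryEquiv.refl _, by
          rw [show ⇑(IsometryEquiv.refl (EuclideanSpace ℝ (Fin n))) = id from rfl,
            Finset.image_id]⟩
    rw [dif_pos hex]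
    have hg := Classical.choose_spec hex
    exact hP _ hg.symm
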